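/- For distinct $p\in\{1,\dots,k\}$, indices $i,j\in I_p$ with $i\ne j$, and distinct $\alpha\ne\beta$ in $\{1,\dots,k\}$, the function $K_{ij}(x,p)=(x_ip_j-x_jp_i)^2$ Poisson-commutes with $\sum_{a\in I_\alpha,\,b\in I_\beta}K_{ab}$, where $I_1,\dots,I_k$ is a partition of $\{1,\dots,n\}$. -/

import Mathlib

open MvPolynomial

/-- The canonical Poisson bracket on polynomial functions on `ℝ^{2m}` with
coordinates `x_a` (variables `Sum.inl a`) and `p_a` (variables `Sum.inr a`). -/
noncomputable def poisson {m : ℕ} (F G : MvPolynomial (Fin m ⊕ Fin m) ℝ) :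
    MvPolynomial (Fin m ⊕ Fin m) ℝ :=
  ∑ a : Fin m,
    (pderiv (Sum.inl a) F * pderiv (Sum.inr a) G -
      pderiv (Sum.inl a) G * pderiv (Sum.inr a) F)

/-- The quadratic function `K_{ij}(x,p) = (x_i p_j - x_j p_i)^2`. -/
noncomputable def Kp {m : ℕ} (i j : Fin m) : MvPolynomial (Fin m ⊕ Fin m) ℝ :=
  (X (Sum.inl i) * X (Sum.inr j) - X (Sum.inl j) * X (Sum.inr i)) ^ 2

lemma Kp_symm {m : ℕ} (i j : Fin m) : Kp i j = Kp j i := by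
  unfold Kp; ring

lemma pderiv_Kp_zero_inl {m : ℕ} {c i j : Fin m} (h1 : c ≠ i) (h2 : c ≠ j) :
    pderiv (Sum.inl c) (Kp i j) = 0 := by
  have hi : (Sum.inl i : Fin m ⊕ Fin m) ≠ Sum.inl c := by simp [h1.symm]
  have hj : (Sum.inl j : Fin m ⊕ Fin m) ≠ Sum.inl c := by simp [h2.symm]
  have hri : (Sum.inr i : Fin m ⊕ Fin m) ≠ Sum.inl c := by simp
  have hrj : (Sum.inr j : Fin m ⊕ Fin m) ≠ Sum.inl c := by simp
  simp [Kp, pow_two, pderiv_mul, pderiv_X_of_ne, hi, hj, hri, hrj]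

lemma pderiv_Kp_zero_inr {m : ℕ} {c i j : Fin m} (h1 : c ≠ i) (h2 : c ≠ j) :
    pderiv (Sum.inr c) (Kp i j) = 0 := by
  have hi : (Sum.inr i : Fin m ⊕ Fin m) ≠ Sum.inr c := by simp [h1.symm]
  have hj : (Sum.inr j : Fin m ⊕ Fin m) ≠ Sum.inr c := by simp [h2.symm]
  have hli : (Sum.inl i : Fin m ⊕ Fin m) ≠ Sum.inr c := by simp
  have hlj : (Sum.inl j : Fin m ⊕ Fin m) ≠ Sum.inr c := by simp
  simp [Kp, pow_two, pderiv_mul, pderiv_X_of_ne, hi, hj, hli, hlj]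

lemma pderiv_Kp_inl_left {m : ℕ} {i j : Fin m} (h : i ≠ j) :
    pderiv (Sum.inl i) (Kp i j) =
      2 * (X (Sum.inl i) * X (Sum.inr j) - X (Sum.inl j) * X (Sum.inr i)) * X (Sum.inr j) := by
  have hj : (Sum.inl j : Fin m ⊕ Fin m) ≠ Sum.inl i := by simp [h.symm]
  have hri : (Sum.inr i : Fin m ⊕ Fin m) ≠ Sum.inl i := by simp
  have hrj : (Sum.inr j : Fin m ⊕ Fin m) ≠ Sum.inl i := by simp
  simp [Kp, pow_two, pderiv_mul, pderiv_X_of_ne, pderiv_X_self, hj, hri, hrj]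
  ring

lemma pderiv_Kp_inl_right {m : ℕ} {i j : Fin m} (h : i ≠ j) :
    pderiv (Sum.inl j) (Kp i j) =
      -(2 * (X (Sum.inl i) * X (Sum.inr j) - X (Sum.inl j) * X (Sum.inr i)) * X (Sum.inr i)) := by
  have hi : (Sum.inl i : Fin m ⊕ Fin m) ≠ Sum.inl j := by simp [h]
  have hri : (Sum.inr i : Fin m ⊕ Fin m) ≠ Sum.inl j := by simp
  have hrj : (Sum.inr j : Fin m ⊕ Fin m) ≠ Sum.inl j := by simp
  simp [Kp, pow_two, pderiv_mul, pderiv_X_of_ne, pderiv_X_self, hi, hri, hrj]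
  ring

lemma pderiv_Kp_inr_left {m : ℕ} {i j : Fin m} (h : i ≠ j) :
    pderiv (Sum.inr i) (Kp i j) =
      -(2 * (X (Sum.inl i) * X (Sum.inr j) - X (Sum.inl j) * X (Sum.inr i)) * X (Sum.inl j)) := by
  have hj : (Sum.inr j : Fin m ⊕ Fin m) ≠ Sum.inr i := by simp [h.symm]
  have hli : (Sum.inl i : Fin m ⊕ Fin m) ≠ Sum.inr i := by simp
  have hlj : (Sum.inl j : Fin m ⊕ Fin m) ≠ Sum.inr i := by simp
  simp [Kp, pow_two, pderiv_mul, pderiv_X_of_ne, pderiv_X_self, hj, hli, hlj]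
  ring

lemma pderiv_Kp_inr_right {m : ℕ} {i j : Fin m} (h : i ≠ j) :
    pderiv (Sum.inr j) (Kp i j) =
      2 * (X (Sum.inl i) * X (Sum.inr j) - X (Sum.inl j) * X (Sum.inr i)) * X (Sum.inl i) := by
  have hi : (Sum.inr i : Fin m ⊕ Fin m) ≠ Sum.inr j := by simp [h]
  have hli : (Sum.inl i : Fin m ⊕ Fin m) ≠ Sum.inr j := by simp
  have hlj : (Sum.inl j : Fin m ⊕ Fin m) ≠ Sum.inr j := by simp
  simp [Kp, pow_two, pderiv_mul, pderiv_X_of_ne, pderiv_X_self, hi, hli, hlj]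
  ring

lemma poisson_add {m : ℕ} (F G H : MvPolynomial (Fin m ⊕ Fin m) ℝ) :
    poisson F (G + H) = poisson F G + poisson F H := by
  unfold poisson
  rw [← Finset.sum_add_distrib]
  refine Finset.sum_congr rfl fun a _ => ?_
  simp only [map_add]
  ring

lemma poisson_zero {m : ℕ} (F : MvPolynomial (Fin m ⊕ Fin m) ℝ) :
    poisson F 0 = 0 := by
  simp [poisson]

lemma poisson_sum {m : ℕ} (F : MvPolynomial (Fin m ⊕ Fin m) ℝ) {ι : Type*}
    (s : Finset ι) (g : ι → MvPolynomial (Fin m ⊕ Fin m) ℝ) :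
    poisson F (∑ x ∈ s, g x) = ∑ x ∈ s, poisson F (g x) := by
  classical
  induction s using Finset.induction_on with
  | empty => simp [poisson_zero]
  | insert _ _ h ih => rw [Finset.sum_insert h, poisson_add, ih, Finset.sum_insert h]

lemma poisson_Kp_disjoint {m : ℕ} {i j a b : Fin m}
    (hai : a ≠ i) (haj : a ≠ j) (hbi : b ≠ i) (hbj : b ≠ j) :
    poisson (Kp i j) (Kp a b) = 0 := by
  unfold poisson
  apply Finset.sum_eq_zero
  intro c _
  by_cases hci : c = i
  · subst hci
    rw [pderiv_Kp_zero_inl hai.symm hbi.symm, pderiv_Kp_zero_inr hai.symm hbi.symm]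
    ring
  · by_cases hcj : c = j
    · subst hcj
      rw [pderiv_Kp_zero_inl haj.symm hbj.symm, pderiv_Kp_zero_inr haj.symm hbj.symm]
      ring
    · rw [pderiv_Kp_zero_inl hci hcj, pderiv_Kp_zero_inr hci hcj]
      ring

lemma poisson_Kp_key {m : ℕ} {i j b : Fin m} (hij : i ≠ j) (hib : i ≠ b) (hjb : j ≠ b) :
    poisson (Kp i j) (Kp i b) + poisson (Kp i j) (Kp j b) = 0 := by
  unfold poisson
  rw [← Finset.sum_add_distrib]
  rw [← Finset.sum_subset (Finset.subset_univ ({i, j, b} : Finset (Fin m)))]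
  · have hji : j ≠ i := hij.symm
    have hbi : b ≠ i := hib.symm
    have hbj : b ≠ j := hjb.symm
    rw [show ({i, j, b} : Finset (Fin m)) = insert i (insert j {b}) from rfl]
    rw [Finset.sum_insert (by simp [hij, hib]), Finset.sum_insert (by simp [hjb]),
      Finset.sum_singleton]
    rw [pderiv_Kp_inl_left hij, pderiv_Kp_inl_right hij,
      pderiv_Kp_inr_left hij, pderiv_Kp_inr_right hij,
      pderiv_Kp_zero_inl hbi hbj, pderiv_Kp_zero_inr hbi hbj,
      pderiv_Kp_inl_left hib, pderiv_Kp_inr_left hib,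
      pderiv_Kp_inl_right hib, pderiv_Kp_inr_right hib,
      pderiv_Kp_zero_inl hji.symm hbi.symm, pderiv_Kp_zero_inr hji.symm hbi.symm,
      pderiv_Kp_inl_left hjb, pderiv_Kp_inr_left hjb,
      pderiv_Kp_inl_right hjb, pderiv_Kp_inr_right hjb,
      pderiv_Kp_zero_inl hij.symm hbj.symm, pderiv_Kp_zero_inr hij.symm hbj.symm]
    ring
  · intro c _ hc
    simp only [Finset.mem_insert, Finset.mem_singleton, not_or] at hc
    obtain ⟨hci, hcj, hcb⟩ := hc
    rw [pderiv_Kp_zero_inl hci hcj, pderiv_Kp_zero_inr hci hcj,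
      pderiv_Kp_zero_inl hci hcb, pderiv_Kp_zero_inl hcj hcb]
    ring

theorem stmt14 (n k : ℕ) (I : Fin k → Finset (Fin n))
    (hne : ∀ α, (I α).Nonempty)
    (hdisj : ∀ α β, α ≠ β → Disjoint (I α) (I β))
    (hcover : ∀ a : Fin n, ∃ α, a ∈ I α)
    (p α β : Fin k) (hαβ : α ≠ β)
    (i j : Fin n) (hi : i ∈ I p) (hj : j ∈ I p) (hij : i ≠ j) :
    poisson (Kp i j) (∑ a ∈ I α, ∑ b ∈ I β, Kp a b) = 0 := by
  have hexp : poisson (Kp i j) (∑ a ∈ I α, ∑ b ∈ I β, Kp a b) =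
      ∑ a ∈ I α, ∑ b ∈ I β, poisson (Kp i j) (Kp a b) := by
    rw [poisson_sum]
    exact Finset.sum_congr rfl fun a _ => poisson_sum _ _ _
  rw [hexp]
  by_cases hpα : p = α
  · subst hpα
    rw [Finset.sum_comm]
    apply Finset.sum_eq_zero
    intro b hb
    have hbi : b ≠ i := fun h => (Finset.disjoint_left.mp (hdisj p β hαβ) hi) (h ▸ hb)
    have hbj : b ≠ j := fun h => (Finset.disjoint_left.mp (hdisj p β hαβ) hj) (h ▸ hb)
    have hsub : ({i, j} : Finset (Fin n)) ⊆ I p := by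
      intro x hx
      rcases Finset.mem_insert.mp hx with rfl | hx
      · exact hi
      · exact (Finset.mem_singleton.mp hx) ▸ hj
    rw [← Finset.sum_sdiff hsub, Finset.sum_pair hij]
    have h1 : ∑ a ∈ I p \ {i, j}, poisson (Kp i j) (Kp a b) = 0 := by
      apply Finset.sum_eq_zero
      intro a ha
      rw [Finset.mem_sdiff, Finset.mem_insert, Finset.mem_singleton, not_or] at ha
      exact poisson_Kp_disjoint ha.2.1 ha.2.2 hbi hbj
    rw [h1, zero_add, poisson_Kp_key hij hbi.symm hbj.symm]
  · by_cases hpβ : p = β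
    · subst hpβ
      apply Finset.sum_eq_zero
      intro a ha
      have hai : a ≠ i := fun h => (Finset.disjoint_left.mp (hdisj p α hαβ.symm) hi) (h ▸ ha)
      have haj : a ≠ j := fun h => (Finset.disjoint_left.mp (hdisj p α hαβ.symm) hj) (h ▸ ha)
      have hsub : ({i, j} : Finset (Fin n)) ⊆ I p := by
        intro x hx
        rcases Finset.mem_insert.mp hx with rfl | hx
        · exact hi
        · exact (Finset.mem_singleton.mp hx) ▸ hj
      rw [← Finset.sum_sdiff hsub, Finset.sum_pair hij]
      have h1 : ∑ b ∈ I p \ {i, j}, poisson (Kp i j) (Kp a b) = 0 := by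
        apply Finset.sum_eq_zero
        intro b hb
        rw [Finset.mem_sdiff, Finset.mem_insert, Finset.mem_singleton, not_or] at hb
        exact poisson_Kp_disjoint hai haj hb.2.1 hb.2.2
      rw [h1, zero_add, Kp_symm a i, Kp_symm a j,
        poisson_Kp_key hij hai.symm haj.symm]
    · apply Finset.sum_eq_zero
      intro a ha
      apply Finset.sum_eq_zero
      intro b hb
      have hai : a ≠ i := fun h => (Finset.disjoint_left.mp (hdisj p α hpα) hi) (h ▸ ha)
      have haj : a ≠ j := fun h => (Finset.disjoint_left.mp (hdisj p α hpα) hj) (h ▸ ha)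
      have hbi : b ≠ i := fun h => (Finset.disjoint_left.mp (hdisj p β hpβ) hi) (h ▸ hb)
      have hbj : b ≠ j := fun h => (Finset.disjoint_left.mp (hdisj p β hpβ) hj) (h ▸ hb)
      exact poisson_Kp_disjoint hai haj hbi hbj
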